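/- There exists N such that for all integers n ≥ N and every feasible vector (t₀, …, t_{2n}) for the cap set linear program satisfying t_i = 0 for all i > n, there exists a feasible vector (t₀', …, t_{2n}') with t_i' = 0 for all i ≥ n and 3·∑_{i=0}^{2n} f_{n,i}·t_i' ≤ 3·∑_{i=0}^{2n} f_{n,i}·t_i. -/

import Mathlib

/-- `f_{n,i}`: the coefficient of `x^i` in `(1 + x + x²)^n`. -/
noncomputable def coeff3 (n i : ℕ) : ℕ :=
  (((1 + Polynomial.X + Polynomial.X ^ 2 : Polynomial ℕ)) ^ n).coeff i

/-- A vector `(t₀, …, t_{2n})` (given as a function on `ℕ`) is feasible for the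
cap set linear program if all its entries are nonnegative and
`t_i + t_j + t_k ≥ 1` whenever `i + j + k ≤ 2n`. -/
def LPFeasible (n : ℕ) (t : ℕ → ℝ) : Prop :=
  (∀ i, i ≤ 2 * n → 0 ≤ t i) ∧
  (∀ i j k : ℕ, i + j + k ≤ 2 * n → 1 ≤ t i + t j + t k)

/-- The objective value `3 ∑_{i=0}^{2n} f_{n,i} t_i` of the cap set linear program. -/
noncomputable def LPObj (n : ℕ) (t : ℕ → ℝ) : ℝ :=
  3 * ∑ i ∈ Finset.range (2 * n + 1), (coeff3 n i : ℝ) * t i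


section Aux
open Polynomial Finset

lemma coeff3_zero (n : ℕ) : coeff3 n 0 = 1 := by
  simp [coeff3, coeff_zero_eq_eval_zero]

lemma coeff3_one_one : coeff3 1 1 = 1 := by
  simp [coeff3, coeff_add, coeff_one, coeff_X, coeff_X_pow]

lemma coeff3_supermul (a b : ℕ) : coeff3 a a * coeff3 b b ≤ coeff3 (a+b) (a+b) := by
  unfold coeff3
  rw [pow_add, coeff_mul]
  exact Finset.single_le_sum
    (f := fun p : ℕ × ℕ =>
      ((1 + X + X ^ 2 : ℕ[X]) ^ a).coeff p.1 * ((1 + X + X ^ 2 : ℕ[X]) ^ b).coeff p.2)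
    (fun i _ => Nat.zero_le _)
    (show ((a, b) : ℕ × ℕ) ∈ antidiagonal (a + b) from Finset.HasAntidiagonal.mem_antidiagonal.mpr rfl)

lemma coeff3_diag_pos (k : ℕ) : 1 ≤ coeff3 k k := by
  induction k with
  | zero => simp [coeff3]
  | succ k ih =>
    have := coeff3_supermul k 1
    rw [coeff3_one_one] at this
    omega

-- step lemmas for 2^j * C(3m,j)
lemma up_step (m j : ℕ) (hj : j < 2*m) :
    2^j * Nat.choose (3*m) j ≤ 2^(j+1) * Nat.choose (3*m) (j+1) := by
  have h := Nat.choose_succ_right_eq (3*m) j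
  have hcancel : (2^j * Nat.choose (3*m) j) * (j+1) ≤ (2^(j+1) * Nat.choose (3*m) (j+1)) * (j+1) := by
    have : 2^(j+1) * Nat.choose (3*m) (j+1) * (j+1) = 2^j * 2 * (Nat.choose (3*m) j * (3*m - j)) := by
      rw [mul_assoc, h]; ring
    rw [this]
    have h2 : (j+1) ≤ 2 * (3*m - j) := by omega
    calc 2^j * Nat.choose (3*m) j * (j+1) ≤ 2^j * Nat.choose (3*m) j * (2*(3*m-j)) :=
          Nat.mul_le_mul_left _ h2
      _ = 2^j * 2 * (Nat.choose (3*m) j * (3*m-j)) := by ring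
  exact Nat.le_of_mul_le_mul_right hcancel (by omega)

lemma down_step (m j : ℕ) (hj : 2*m ≤ j) :
    2^(j+1) * Nat.choose (3*m) (j+1) ≤ 2^j * Nat.choose (3*m) j := by
  have h := Nat.choose_succ_right_eq (3*m) j
  have hcancel : (2^(j+1) * Nat.choose (3*m) (j+1)) * (j+1) ≤ (2^j * Nat.choose (3*m) j) * (j+1) := by
    have hrw : 2^(j+1) * Nat.choose (3*m) (j+1) * (j+1) = 2^j * 2 * (Nat.choose (3*m) j * (3*m - j)) := by
      rw [mul_assoc, h]; ring
    rw [hrw]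
    have h2 : 2 * (3*m - j) ≤ (j+1) := by omega
    calc 2^j * 2 * (Nat.choose (3*m) j * (3*m-j))
        = 2^j * Nat.choose (3*m) j * (2*(3*m-j)) := by ring
      _ ≤ 2^j * Nat.choose (3*m) j * (j+1) := Nat.mul_le_mul_left _ h2
  exact Nat.le_of_mul_le_mul_right hcancel (by omega)

lemma pow2_choose (m : ℕ) : ∀ j, 2^j * Nat.choose (3*m) j ≤ 2^(2*m) * Nat.choose (3*m) (2*m) := by
  have hup : ∀ k j, j + k = 2*m → 2^j * Nat.choose (3*m) j ≤ 2^(2*m) * Nat.choose (3*m) (2*m) := by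
    intro k
    induction k with
    | zero => intro j hj; simp only [Nat.add_zero] at hj; subst hj; exact le_rfl
    | succ k ih =>
      intro j hj
      exact le_trans (up_step m j (by omega)) (ih (j+1) (by omega))
  have hdown : ∀ k, 2^(2*m+k) * Nat.choose (3*m) (2*m+k) ≤ 2^(2*m) * Nat.choose (3*m) (2*m) := by
    intro k
    induction k with
    | zero => exact le_rfl
    | succ k ih => exact le_trans (down_step m (2*m+k) (by omega)) ih
  intro j
  rcases le_or_gt j (2*m) with h | h
  · exact hup (2*m - j) j (by omega)
  · have := hdown (j - 2*m)
    rwa [show 2*m + (j - 2*m) = j by omega] at this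

lemma pow27_le (m : ℕ) : 27^m ≤ (3*m+1) * (2^(2*m) * Nat.choose (3*m) (2*m)) := by
  have h3 : (27:ℕ)^m = (2+1)^(3*m) := by
    norm_num [pow_mul]
  rw [h3, add_pow]
  calc ∑ k ∈ range (3*m+1), 2^k * 1^(3*m-k) * Nat.choose (3*m) k
      = ∑ k ∈ range (3*m+1), 2^k * Nat.choose (3*m) k := by simp
    _ ≤ ∑ _k ∈ range (3*m+1), 2^(2*m) * Nat.choose (3*m) (2*m) :=
        Finset.sum_le_sum (fun k _ => pow2_choose m k)
    _ = (3*m+1) * (2^(2*m) * Nat.choose (3*m) (2*m)) := by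
        rw [Finset.sum_const, Finset.card_range, smul_eq_mul]

lemma four_pow_le (m : ℕ) : 2^(2*m) ≤ (2*m+1) * Nat.choose (2*m) m := by
  have h := Nat.sum_range_choose (2*m)
  calc 2^(2*m) = ∑ i ∈ range (2*m+1), Nat.choose (2*m) i := h.symm
    _ ≤ ∑ _i ∈ range (2*m+1), Nat.choose (2*m) m :=
        Finset.sum_le_sum (fun i _ => Nat.choose_le_centralBinom i m)
    _ = (2*m+1) * Nat.choose (2*m) m := by
        rw [Finset.sum_const, Finset.card_range, smul_eq_mul]

lemma coeff3_3m (m : ℕ) :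
    Nat.choose (3*m) (2*m) * Nat.choose (2*m) m ≤ coeff3 (3*m) (3*m) := by
  unfold coeff3
  have hsplit : (1 + X + X ^ 2 : ℕ[X]) = (1 + X) + X^2 := by ring
  rw [hsplit, add_pow, finset_sum_coeff]
  have hterm : ∀ k ∈ range (3*m+1), (0:ℕ) ≤ ((1+X)^k * (X^2)^(3*m-k) * (Nat.choose (3*m) k : ℕ[X])).coeff (3*m) :=
    fun _ _ => Nat.zero_le _
  have hmem : 2*m ∈ range (3*m+1) := by
    simp only [Finset.mem_range]; omega
  have h2m : ((1+X)^(2*m) * (X^2)^(3*m-2*m) * (Nat.choose (3*m) (2*m) : ℕ[X])).coeff (3*m)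
      = Nat.choose (3*m) (2*m) * Nat.choose (2*m) m := by
    rw [← C_eq_natCast, coeff_mul_C, show 3*m - 2*m = m by omega, ← pow_mul,
      coeff_mul_X_pow']
    simp only [show 2*m ≤ 3*m by omega, if_true, show 3*m - 2*m = m by omega,
      coeff_one_add_X_pow]
    simp [Nat.cast_id]; ring
  refine le_trans (le_of_eq h2m.symm) ?_
  exact Finset.single_le_sum
    (f := fun k => ((1+X:ℕ[X])^k * (X^2)^(3*m-k) * ((Nat.choose (3*m) k : ℕ) : ℕ[X])).coeff (3*m))
    (fun k _ => Nat.zero_le _) hmem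

lemma central_lb (n : ℕ) : 3^n ≤ 9*(n+1)^2 * coeff3 n n := by
  set m := n / 3 with hm
  have hmn : 3*m ≤ n ∧ n ≤ 3*m + 2 := by constructor <;> omega
  -- coeff3 n n ≥ coeff3 (3m) (3m)
  have h1 : coeff3 (3*m) (3*m) ≤ coeff3 n n := by
    have := coeff3_supermul (3*m) (n - 3*m)
    have hd := coeff3_diag_pos (n - 3*m)
    rw [show 3*m + (n - 3*m) = n by omega] at this
    nlinarith [this, hd]
  -- 27^m ≤ (3m+1)(2m+1) * coeff3 (3m) (3m)
  have h2 : 27^m * 2^(2*m) ≤ (3*m+1) * ((2*m+1) * (2^(2*m) * coeff3 (3*m) (3*m))) := by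
    calc 27^m * 2^(2*m)
        ≤ ((3*m+1) * (2^(2*m) * Nat.choose (3*m) (2*m))) * ((2*m+1) * Nat.choose (2*m) m) :=
          Nat.mul_le_mul (pow27_le m) (four_pow_le m)
      _ = (3*m+1) * ((2*m+1) * (2^(2*m) * (Nat.choose (3*m) (2*m) * Nat.choose (2*m) m))) := by
          ring
      _ ≤ (3*m+1) * ((2*m+1) * (2^(2*m) * coeff3 (3*m) (3*m))) := by
          have := coeff3_3m m
          exact Nat.mul_le_mul_left _ (Nat.mul_le_mul_left _ (Nat.mul_le_mul_left _ this))
  have h3 : 27^m ≤ (3*m+1) * (2*m+1) * coeff3 (3*m) (3*m) := by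
    have h2' : 27^m * 2^(2*m) ≤ ((3*m+1) * (2*m+1) * coeff3 (3*m) (3*m)) * 2^(2*m) := by
      calc 27^m * 2^(2*m) ≤ (3*m+1) * ((2*m+1) * (2^(2*m) * coeff3 (3*m) (3*m))) := h2
        _ = ((3*m+1) * (2*m+1) * coeff3 (3*m) (3*m)) * 2^(2*m) := by ring
    exact Nat.le_of_mul_le_mul_right h2' (Nat.pow_pos (by norm_num))
  have h4 : 3^n ≤ 9 * 27^m := by
    calc 3^n ≤ 3^(3*m+2) := Nat.pow_le_pow_right (by norm_num) (by omega)
      _ = 9 * 27^m := by rw [pow_add, pow_mul]; norm_num; ring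
  calc 3^n ≤ 9 * 27^m := h4
    _ ≤ 9 * ((3*m+1) * (2*m+1) * coeff3 (3*m) (3*m)) := Nat.mul_le_mul_left _ h3
    _ ≤ 9 * ((n+1) * (n+1) * coeff3 n n) := by
        apply Nat.mul_le_mul_left
        exact Nat.mul_le_mul (Nat.mul_le_mul (by omega) (by omega)) h1
    _ = 9*(n+1)^2 * coeff3 n n := by ring

lemma keyNat : ∀ n, 70 ≤ n → 9*(n+1)^2*(4^n + 2^(n/2)*7^n) ≤ 12^n := by
  intro n
  induction n using Nat.strong_induction_on with
  | _ n ih =>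
    intro hn
    rcases lt_or_ge n 72 with h | h
    · interval_cases n <;> norm_num
    · obtain ⟨a, rfl⟩ : ∃ a, n = a + 2 := ⟨n - 2, by omega⟩
      have ha : 70 ≤ a := by omega
      have IH := ih a (by omega) ha
      have hdiv : (a+2)/2 = a/2 + 1 := by omega
      rw [hdiv]
      have e1 : (4:ℕ)^(a+2) = 16 * 4^a := by ring
      have e2 : (2:ℕ)^(a/2+1) * 7^(a+2) = 98 * (2^(a/2) * 7^a) := by ring
      have e3 : (12:ℕ)^(a+2) = 144 * 12^a := by ring
      rw [e1, e2, e3]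
      have step1 : 9*(a+2+1)^2*(16*4^a + 98*(2^(a/2)*7^a)) ≤ 98 * (9*(a+3)^2*(4^a + 2^(a/2)*7^a)) := by
        nlinarith [Nat.zero_le (4^a), Nat.zero_le (2^(a/2)*7^a)]
      have step2 : 98 * (9*(a+3)^2*(4^a + 2^(a/2)*7^a)) ≤ 144 * (9*(a+1)^2*(4^a + 2^(a/2)*7^a)) := by
        have hq : 98*(a+3)^2 ≤ 144*(a+1)^2 := by nlinarith
        nlinarith [Nat.zero_le (4^a + 2^(a/2)*7^a)]
      calc 9*(a+2+1)^2*(16*4^a + 98*(2^(a/2)*7^a))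
          ≤ 98 * (9*(a+3)^2*(4^a + 2^(a/2)*7^a)) := step1
        _ ≤ 144 * (9*(a+1)^2*(4^a + 2^(a/2)*7^a)) := step2
        _ ≤ 144 * 12^a := Nat.mul_le_mul_left _ IH

lemma eval_half (n : ℕ) :
    ∑ i ∈ range (2*n+1), (coeff3 n i : ℝ) * (1/2:ℝ)^i = (7/4:ℝ)^n := by
  set q : ℝ[X] := (1 + X + X^2)^n with hq
  have hcoeff : ∀ i, q.coeff i = (coeff3 n i : ℝ) := by
    intro i
    have hmap : q = Polynomial.map (Nat.castRingHom ℝ) ((1 + X + X^2 : ℕ[X])^n) := by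
      simp [Polynomial.map_pow, Polynomial.map_add, Polynomial.map_one, Polynomial.map_X,
        hq]
    rw [hmap, coeff_map, coeff3]
    rfl
  have hdeg : q.natDegree < 2*n+1 := by
    have h1 : (1 + X + X^2 : ℝ[X]).natDegree ≤ 2 := by
      apply le_trans (natDegree_add_le _ _)
      simp [natDegree_add_le, natDegree_X_pow]
      exact le_trans (natDegree_add_le _ _) (by simp)
    calc q.natDegree ≤ n * (1 + X + X^2 : ℝ[X]).natDegree := natDegree_pow_le
      _ ≤ n * 2 := Nat.mul_le_mul_left _ h1
      _ < 2*n+1 := by omega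
  have heval := eval_eq_sum_range' hdeg ((1:ℝ)/2)
  have heval2 : q.eval (1/2) = (7/4:ℝ)^n := by
    simp [hq, eval_pow]
    norm_num
  rw [heval2] at heval
  rw [heval]
  exact Finset.sum_congr rfl (fun i _ => by rw [hcoeff])

lemma main_ineq (n : ℕ) (hn : 70 ≤ n) :
    1 + ∑ i ∈ range (n/2+1), (coeff3 n i : ℝ) ≤ (coeff3 n n : ℝ) := by
  have hS : ∑ i ∈ range (n/2+1), (coeff3 n i : ℝ) ≤ 2^(n/2) * (7/4:ℝ)^n := by
    have step1 : ∑ i ∈ range (n/2+1), (coeff3 n i : ℝ)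
        ≤ ∑ i ∈ range (n/2+1), (coeff3 n i : ℝ) * ((1/2:ℝ)^i * 2^(n/2)) := by
      apply Finset.sum_le_sum
      intro i hi
      have hi' : i ≤ n/2 := by simpa [Nat.lt_succ_iff] using hi
      have hpow : (1/2:ℝ)^i * 2^(n/2) = 2^(n/2 - i) := by
        have : (2:ℝ)^(n/2) = 2^i * 2^(n/2 - i) := by
          rw [← pow_add]; congr 1; omega
        rw [this, one_div, inv_pow, ← mul_assoc, inv_mul_cancel₀ (by positivity), one_mul]
      rw [hpow]
      have h1 : (1:ℝ) ≤ 2^(n/2 - i) := one_le_pow₀ (by norm_num)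
      nlinarith [h1, Nat.cast_nonneg (α := ℝ) (coeff3 n i)]
    have step2 : ∑ i ∈ range (n/2+1), (coeff3 n i : ℝ) * ((1/2:ℝ)^i * 2^(n/2))
        ≤ ∑ i ∈ range (2*n+1), (coeff3 n i : ℝ) * ((1/2:ℝ)^i * 2^(n/2)) := by
      apply Finset.sum_le_sum_of_subset_of_nonneg
      · apply Finset.range_subset_range.mpr; omega
      · intro i _ _; positivity
    have step3 : ∑ i ∈ range (2*n+1), (coeff3 n i : ℝ) * ((1/2:ℝ)^i * 2^(n/2))
        = 2^(n/2) * (7/4:ℝ)^n := by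
      rw [← eval_half n, Finset.mul_sum]
      exact Finset.sum_congr rfl (fun i _ => by ring)
    linarith
  have hF : (3:ℝ)^n ≤ 9*((n:ℝ)+1)^2 * (coeff3 n n : ℝ) := by
    have := central_lb n
    have := (Nat.cast_le (α := ℝ)).mpr this
    push_cast at this
    convert this using 2
  have hK : 9*((n:ℝ)+1)^2 * ((4:ℝ)^n + 2^(n/2)*7^n) ≤ 12^n := by
    have := (Nat.cast_le (α := ℝ)).mpr (keyNat n hn)
    push_cast at this
    convert this using 2
  have h74 : ((7:ℝ)/4)^n * 4^n = 7^n := by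
    rw [div_pow]; field_simp
  have hpos4 : (0:ℝ) < 4^n := by positivity
  have hposc : (0:ℝ) < 9*((n:ℝ)+1)^2 := by positivity
  have key2 : (1 + 2^(n/2) * (7/4:ℝ)^n) * 4^n ≤ (coeff3 n n : ℝ) * 4^n := by
    have expand : (1 + 2^(n/2)*(7/4:ℝ)^n) * 4^n = 4^n + 2^(n/2)*7^n := by
      rw [add_mul, one_mul, mul_assoc, h74]
    have h12 : (12:ℝ)^n = 3^n * 4^n := by rw [← mul_pow]; norm_num
    have hmul : 9*((n:ℝ)+1)^2 * ((1 + 2^(n/2)*(7/4:ℝ)^n) * 4^n)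
        ≤ 9*((n:ℝ)+1)^2 * ((coeff3 n n : ℝ) * 4^n) := by
      rw [expand]
      calc 9*((n:ℝ)+1)^2 * ((4:ℝ)^n + 2^(n/2)*7^n) ≤ 12^n := hK
        _ = 3^n * 4^n := h12
        _ ≤ (9*((n:ℝ)+1)^2 * (coeff3 n n : ℝ)) * 4^n :=
            mul_le_mul_of_nonneg_right hF (le_of_lt hpos4)
        _ = 9*((n:ℝ)+1)^2 * ((coeff3 n n : ℝ) * 4^n) := by ring
    exact le_of_mul_le_mul_left hmul hposc
  have key3 : 1 + 2^(n/2) * (7/4:ℝ)^n ≤ (coeff3 n n : ℝ) :=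
    le_of_mul_le_mul_right (by linarith [key2]) hpos4
  linarith

end Aux

open Finset in
/-- For large `n`, any feasible vector vanishing above `n` can be improved to one
vanishing at and above `n`. -/
theorem lp_improve_at_n :
    ∃ N : ℕ, ∀ n : ℕ, N ≤ n → ∀ t : ℕ → ℝ, LPFeasible n t →
      (∀ i, n < i → i ≤ 2 * n → t i = 0) →
      ∃ t' : ℕ → ℝ, LPFeasible n t' ∧ (∀ i, n ≤ i → i ≤ 2 * n → t' i = 0) ∧
        LPObj n t' ≤ LPObj n t := by
  refine ⟨70, fun n hn t ht hzero => ?_⟩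
  obtain ⟨hpos, hcon⟩ := ht
  set ε := t n with hε
  have hε0 : 0 ≤ ε := hpos n (by omega)
  have h0 : 1 ≤ t n + t n + t 0 := hcon n n 0 (by omega)
  set t' : ℕ → ℝ := fun i =>
    if n ≤ i then 0 else if i = 0 then max (t 0 + ε) 1 else if i ≤ n/2 then t i + ε else t i
    with ht'
  -- branch values of t'
  have hzero' : ∀ i, n ≤ i → t' i = 0 := fun i hi => by simp [ht', hi]
  have ht'at0 : t' 0 = max (t 0 + ε) 1 := by
    simp [ht', show ¬ n ≤ 0 by omega]
  have ht'mid : ∀ i, 0 < i → i ≤ n/2 → t' i = t i + ε := by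
    intro i h1 h2
    simp [ht', show ¬ n ≤ i by omega, show ¬ i = 0 by omega, h2]
  have ht'hi : ∀ i, n/2 < i → i < n → t' i = t i := by
    intro i h2 h3
    simp [ht', show ¬ n ≤ i by omega, show ¬ i = 0 by omega, show ¬ i ≤ n/2 by omega]
  have tmono : ∀ a, a < n → t a ≤ t' a := by
    intro a ha
    rcases Nat.eq_zero_or_pos a with h | h
    · subst h; rw [ht'at0]; exact le_trans (by linarith) (le_max_left _ _)
    rcases le_or_gt a (n/2) with h2 | h2
    · rw [ht'mid a h h2]; linarith
    · rw [ht'hi a h2 ha]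
  have tplus : ∀ a, a < n → a ≤ n/2 → t a + ε ≤ t' a := by
    intro a ha ha2
    rcases Nat.eq_zero_or_pos a with h | h
    · subst h; rw [ht'at0]; exact le_max_left _ _
    · rw [ht'mid a h ha2]
  have ht'0 : 1 ≤ t' 0 := by rw [ht'at0]; exact le_max_right _ _
  have hnn : ∀ i, 0 ≤ t' i := by
    intro i
    rcases le_or_gt n i with h | h
    · rw [hzero' i h]
    rcases Nat.eq_zero_or_pos i with h1 | h1
    · subst h1; linarith
    rcases le_or_gt i (n/2) with h2 | h2
    · rw [ht'mid i h1 h2]; have := hpos i (by omega); linarith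
    · rw [ht'hi i h2 h]; exact hpos i (by omega)
  -- pairwise constraint
  have pair' : ∀ a b, a + b ≤ n → a ≤ b → b < n → 1 ≤ t' a + t' b := by
    intro a b hab hab2 hb
    have ha2 : a ≤ n/2 := by omega
    have h1 := tplus a (by omega) ha2
    have h2 := tmono b hb
    have h3 := hcon a b n (by omega)
    linarith
  have pair : ∀ a b, a + b ≤ n → a < n → b < n → 1 ≤ t' a + t' b := by
    intro a b hab ha hb
    rcases le_total a b with h | h
    · exact pair' a b hab h hb
    · have := pair' b a (by omega) h ha; linarith
  refine ⟨t', ⟨fun i _ => hnn i, ?_⟩, fun i hi _ => hzero' i hi, ?_⟩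
  · intro i j k hijk
    rcases lt_or_ge i n with hi | hi <;> rcases lt_or_ge j n with hj | hj <;>
      rcases lt_or_ge k n with hk | hk
    · have h1 := hcon i j k hijk
      have := tmono i hi; have := tmono j hj; have := tmono k hk; linarith
    · have := pair i j (by omega) hi hj; have := hnn k; linarith
    · have := pair i k (by omega) hi hk; have := hnn j; linarith
    · have hi0 : i = 0 := by omega
      subst hi0; have := hnn j; have := hnn k; linarith [ht'0]
    · have := pair j k (by omega) hj hk; have := hnn i; linarith
    · have hj0 : j = 0 := by omega
      subst hj0; have := hnn i; have := hnn k; linarith [ht'0]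
    · have hk0 : k = 0 := by omega
      subst hk0; have := hnn i; have := hnn j; linarith [ht'0]
    · omega
  -- objective comparison
  have key : ∑ i ∈ Finset.range (2*n+1), (coeff3 n i : ℝ) * t' i
      ≤ ∑ i ∈ Finset.range (2*n+1), (coeff3 n i : ℝ) * t i := by
    set w : ℕ → ℝ := fun i => if i = 0 then 2 else if i ≤ n/2 then (coeff3 n i : ℝ) else 0 with hw
    have hw0 : w 0 = 2 := by simp [hw]
    have hwmid : ∀ i, 0 < i → i ≤ n/2 → w i = (coeff3 n i : ℝ) := by
      intro i h1 h2
      simp [hw, show ¬ i = 0 by omega, h2]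
    have hwhi : ∀ i, n/2 < i → w i = 0 := by
      intro i h2
      simp [hw, show ¬ i = 0 by omega, show ¬ i ≤ n/2 by omega]
    have hterm : ∀ i ∈ Finset.range (2*n+1),
        (coeff3 n i : ℝ) * t' i + (if i = n then (coeff3 n n : ℝ) * ε else 0)
        ≤ (coeff3 n i : ℝ) * t i + ε * w i := by
      intro i hi
      simp only [Finset.mem_range] at hi
      rcases Nat.eq_zero_or_pos i with h1 | h1
      · subst h1
        rw [if_neg (show ¬ (0:ℕ) = n by omega), ht'at0, hw0, coeff3_zero]
        have hmax : max (t 0 + ε) 1 ≤ t 0 + 2*ε := by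
          apply max_le <;> [skip; skip] <;> linarith
        push_cast
        linarith
      rcases lt_or_ge i n with h2 | h2
      · rw [if_neg (show ¬ i = n by omega)]
        rcases le_or_gt i (n/2) with h3 | h3
        · rw [ht'mid i h1 h3, hwmid i h1 h3]
          exact le_of_eq (by ring)
        · rw [ht'hi i h3 h2, hwhi i h3]
          linarith
      rcases Nat.eq_or_lt_of_le h2 with h4 | h4
      · subst h4
        rw [if_pos rfl, hzero' n le_rfl, hwhi n (by omega)]
        simp [hε]
      · rw [if_neg (show ¬ i = n by omega), hzero' i (by omega), hzero i h4 (by omega),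
          hwhi i (by omega)]
        simp
    have hsum := Finset.sum_le_sum hterm
    rw [Finset.sum_add_distrib, Finset.sum_add_distrib, Finset.sum_ite_eq' (Finset.range (2*n+1)) n
      (fun _ => (coeff3 n n : ℝ) * ε), if_pos (by simp only [Finset.mem_range]; omega)] at hsum
    have hwsum : ∑ i ∈ Finset.range (2*n+1), ε * w i ≤ ε * (coeff3 n n : ℝ) := by
      have hw1 : ∑ i ∈ Finset.range (2*n+1), w i = ∑ i ∈ Finset.range (n/2+1), w i := by
        symm
        apply Finset.sum_subset
        · apply Finset.range_subset_range.mpr; omega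
        · intro i _ hi2
          simp only [Finset.mem_range, Nat.lt_succ_iff, not_le] at hi2
          exact hwhi i hi2
      have hw2 : ∑ i ∈ Finset.range (n/2+1), w i
          ≤ 1 + ∑ i ∈ Finset.range (n/2+1), (coeff3 n i : ℝ) := by
        have hb : ∀ i ∈ Finset.range (n/2+1),
            w i ≤ (coeff3 n i : ℝ) + (if i = 0 then 1 else 0) := by
          intro i _
          rcases Nat.eq_zero_or_pos i with h | h
          · subst h; rw [hw0, if_pos rfl, coeff3_zero]; norm_num
          rcases le_or_gt i (n/2) with h2 | h2
          · rw [hwmid i h h2, if_neg (by omega)]; simp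
          · rw [hwhi i h2, if_neg (by omega)]; positivity
        calc ∑ i ∈ Finset.range (n/2+1), w i
            ≤ ∑ i ∈ Finset.range (n/2+1), ((coeff3 n i : ℝ) + (if i = 0 then 1 else 0)) :=
              Finset.sum_le_sum hb
          _ = ∑ i ∈ Finset.range (n/2+1), (coeff3 n i : ℝ) + 1 := by
              rw [Finset.sum_add_distrib, Finset.sum_ite_eq' (Finset.range (n/2+1)) 0
                (fun _ => (1:ℝ)), if_pos (by simp)]
          _ = 1 + ∑ i ∈ Finset.range (n/2+1), (coeff3 n i : ℝ) := by ring
      have hmain := main_ineq n hn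
      calc ∑ i ∈ Finset.range (2*n+1), ε * w i = ε * ∑ i ∈ Finset.range (2*n+1), w i := by
            rw [Finset.mul_sum]
        _ ≤ ε * (coeff3 n n : ℝ) := by
            apply mul_le_mul_of_nonneg_left _ hε0
            rw [hw1]; linarith
    linarith
  unfold LPObj
  linarith
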